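/- Let C be a full commutative C*-category and A an object. Then the restriction map [ω] ↦ ω|_{C_{AA}}, from the base spectrum Sp_b(C) (unitary equivalence classes of *-functors C → ℂ) to the Gelfand spectrum of the commutative unital C*-algebra C_{AA}, is a well-defined bijection. -/

import Mathlib

open ComplexConjugate

/-- A C*-category: Hom spaces are complex Banach spaces, composition is bilinear and
submultiplicative, and there is an antilinear involutive contravariant *-operation fixing
objects, satisfying the C*-identity and positivity. -/
class CStarCat (O : Type*) (Hom : O → O → Type*)
    [∀ A B, NormedAddCommGroup (Hom A B)] [∀ A B, NormedSpace ℂ (Hom A B)] where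
  complete : ∀ A B, CompleteSpace (Hom A B)
  comp : ∀ {A B C : O}, Hom A B → Hom B C → Hom A C
  ide : ∀ A : O, Hom A A
  comp_assoc : ∀ {A B C D : O} (x : Hom A B) (y : Hom B C) (z : Hom C D),
      comp (comp x y) z = comp x (comp y z)
  ide_comp : ∀ {A B : O} (x : Hom A B), comp (ide A) x = x
  comp_ide : ∀ {A B : O} (x : Hom A B), comp x (ide B) = x
  comp_add_left : ∀ {A B C : O} (x y : Hom A B) (z : Hom B C),
      comp (x + y) z = comp x z + comp y z
  comp_add_right : ∀ {A B C : O} (x : Hom A B) (y z : Hom B C),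
      comp x (y + z) = comp x y + comp x z
  comp_smul_left : ∀ {A B C : O} (c : ℂ) (x : Hom A B) (z : Hom B C),
      comp (c • x) z = c • comp x z
  comp_smul_right : ∀ {A B C : O} (c : ℂ) (x : Hom A B) (z : Hom B C),
      comp x (c • z) = c • comp x z
  norm_comp_le : ∀ {A B C : O} (x : Hom A B) (y : Hom B C), ‖comp x y‖ ≤ ‖x‖ * ‖y‖
  invol : ∀ {A B : O}, Hom A B → Hom B A
  invol_invol : ∀ {A B : O} (x : Hom A B), invol (invol x) = x
  invol_add : ∀ {A B : O} (x y : Hom A B), invol (x + y) = invol x + invol y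
  invol_smul : ∀ {A B : O} (c : ℂ) (x : Hom A B), invol (c • x) = (conj c) • invol x
  invol_comp : ∀ {A B C : O} (x : Hom A B) (y : Hom B C),
      invol (comp x y) = comp (invol y) (invol x)
  norm_invol_comp : ∀ {A B : O} (x : Hom A B), ‖comp (invol x) x‖ = ‖x‖ ^ 2
  pos : ∀ {A B : O} (x : Hom A B), ∃ y : Hom B B, comp (invol x) x = comp (invol y) y

/-- A ℂ-valued *-functor on a C*-category (ℂ viewed as a one-object C*-category). -/
structure CChar (O : Type*) (Hom : O → O → Type*)
    [∀ A B, NormedAddCommGroup (Hom A B)] [∀ A B, NormedSpace ℂ (Hom A B)]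
    [CStarCat O Hom] where
  ω : ∀ {A B : O}, Hom A B → ℂ
  map_add : ∀ {A B : O} (x y : Hom A B), ω (x + y) = ω x + ω y
  map_smul : ∀ {A B : O} (c : ℂ) (x : Hom A B), ω (c • x) = c * ω x
  map_comp : ∀ {A B C : O} (x : Hom A B) (y : Hom B C),
      ω (CStarCat.comp x y) = ω x * ω y
  map_ide : ∀ A : O, ω (CStarCat.ide A) = 1
  map_invol : ∀ {A B : O} (x : Hom A B), ω (CStarCat.invol x) = conj (ω x)

/-- Unitary equivalence of ℂ-valued *-functors, by a unitary natural transformation. -/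
def UnitEquiv {O : Type*} {Hom : O → O → Type*}
    [∀ A B, NormedAddCommGroup (Hom A B)] [∀ A B, NormedSpace ℂ (Hom A B)]
    [CStarCat O Hom] (ω ω' : CChar O Hom) : Prop :=
  ∃ ν : O → ℂ, (∀ A, ‖ν A‖ = 1) ∧
    ∀ {A B : O} (x : Hom A B), ω'.ω x * ν B = ν A * ω.ω x

/-- A C*-category is commutative if every diagonal block is a commutative C*-algebra. -/
def IsCommutative (O : Type*) (Hom : O → O → Type*)
    [∀ A B, NormedAddCommGroup (Hom A B)] [∀ A B, NormedSpace ℂ (Hom A B)]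
    [CStarCat O Hom] : Prop :=
  ∀ (A : O) (x y : Hom A A), CStarCat.comp x y = CStarCat.comp y x

/-- A C*-category is full if for all objects A, B the span of the products
C_{AB} ∘ C_{BA} is dense in C_{AA} (imprimitivity of the off-diagonal bimodules). -/
def IsFull (O : Type*) (Hom : O → O → Type*)
    [∀ A B, NormedAddCommGroup (Hom A B)] [∀ A B, NormedSpace ℂ (Hom A B)]
    [CStarCat O Hom] : Prop :=
  ∀ A B : O,
    closure ((Submodule.span ℂ
      {z : Hom A A | ∃ (x : Hom A B) (y : Hom B A), z = CStarCat.comp x y} :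
        Submodule ℂ (Hom A A)) : Set (Hom A A)) = Set.univ

/-- A character (unital *-homomorphism to ℂ) on the diagonal C*-algebra C_{AA}:
a point of the Gelfand spectrum of C_{AA}. -/
structure DiagChar (O : Type*) (Hom : O → O → Type*)
    [∀ A B, NormedAddCommGroup (Hom A B)] [∀ A B, NormedSpace ℂ (Hom A B)]
    [CStarCat O Hom] (A : O) where
  χ : Hom A A → ℂ
  map_add : ∀ x y : Hom A A, χ (x + y) = χ x + χ y
  map_smul : ∀ (c : ℂ) (x : Hom A A), χ (c • x) = c * χ x
  map_mul : ∀ x y : Hom A A, χ (CStarCat.comp x y) = χ x * χ y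
  map_one : χ (CStarCat.ide A) = 1
  map_star : ∀ x : Hom A A, χ (CStarCat.invol x) = conj (χ x)

section Aux

variable {O : Type*} {Hom : O → O → Type*}
    [∀ A B, NormedAddCommGroup (Hom A B)] [∀ A B, NormedSpace ℂ (Hom A B)]
    [CStarCat O Hom]

open CStarCat

lemma CStarAux.zero_comp {A B C : O} (y : Hom B C) : comp (0 : Hom A B) y = 0 := by
  have h := comp_smul_left (0 : ℂ) (0 : Hom A B) y
  simpa using h

lemma CStarAux.comp_zero {A B C : O} (x : Hom A B) : comp x (0 : Hom B C) = 0 := by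
  have h := comp_smul_right (0 : ℂ) x (0 : Hom B C)
  simpa using h

lemma CStarAux.invol_ide (A : O) : invol (ide A : Hom A A) = ide A := by
  have h : ∀ x : Hom A A, invol x = comp (invol x) (invol (ide A)) := by
    intro x
    conv_lhs => rw [← ide_comp x]
    rw [invol_comp]
  have h2 := h (invol (ide A))
  rw [invol_invol, ide_comp] at h2
  exact h2.symm

lemma DiagChar.map_zero' {A : O} (χ : DiagChar O Hom A) : χ.χ 0 = 0 := by
  have h := χ.map_smul 0 0
  simpa using h

/-- The diagonal block as a ring. -/
@[reducible]
noncomputable def CStarAux.diagRing (A : O) : Ring (Hom A A) :=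
  { (inferInstance : AddCommGroup (Hom A A)) with
    mul := comp
    one := ide A
    mul_assoc := comp_assoc
    one_mul := ide_comp
    mul_one := comp_ide
    left_distrib := fun a b c => comp_add_right a b c
    right_distrib := fun a b c => comp_add_left a b c
    zero_mul := CStarAux.zero_comp
    mul_zero := CStarAux.comp_zero }

/-- The diagonal block as a normed ring. -/
@[reducible]
noncomputable def CStarAux.diagNormedRing (A : O) : NormedRing (Hom A A) :=
  { CStarAux.diagRing (Hom := Hom) A, (inferInstance : NormedAddCommGroup (Hom A A)) with
    dist_eq := NormedAddCommGroup.dist_eq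
    norm_mul_le := fun a b => norm_comp_le a b }

/-- Automatic boundedness of characters. -/
lemma DiagChar.norm_le' {A : O} (χ : DiagChar O Hom A) (a : Hom A A) : ‖χ.χ a‖ ≤ ‖a‖ := by
  by_contra hlt
  push_neg at hlt
  have hpos : 0 < ‖χ.χ a‖ := lt_of_le_of_lt (norm_nonneg a) hlt
  have hc0 : χ.χ a ≠ 0 := by
    intro h0
    rw [h0, norm_zero] at hpos
    exact lt_irrefl 0 hpos
  set b : Hom A A := (χ.χ a)⁻¹ • a with hb
  have hχb : χ.χ b = 1 := by
    rw [hb, χ.map_smul, inv_mul_cancel₀ hc0]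
  have hnb : ‖b‖ < 1 := by
    calc ‖b‖ = ‖(χ.χ a)⁻¹‖ * ‖a‖ := by rw [hb, norm_smul]
      _ = ‖χ.χ a‖⁻¹ * ‖a‖ := by rw [norm_inv]
      _ < ‖χ.χ a‖⁻¹ * ‖χ.χ a‖ := mul_lt_mul_of_pos_left hlt (inv_pos.mpr hpos)
      _ = 1 := inv_mul_cancel₀ hpos.ne'
  letI : NormedRing (Hom A A) := CStarAux.diagNormedRing A
  letI : CompleteSpace (Hom A A) := CStarCat.complete A A
  have h0 : χ.χ (((Units.oneSub b hnb : (Hom A A)ˣ) : Hom A A)) = 0 := by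
    have hval : ((Units.oneSub b hnb : (Hom A A)ˣ) : Hom A A) = 1 - b := rfl
    have hone : χ.χ (1 : Hom A A) = 1 := χ.map_one
    have hneg : χ.χ (-b) = -χ.χ b := by
      have h1 : (-b) = (-1 : ℂ) • b := by rw [neg_one_smul]
      rw [h1, χ.map_smul]
      ring
    rw [hval, sub_eq_add_neg, χ.map_add, hone, hneg, hχb]
    ring
  have h1 : χ.χ (((Units.oneSub b hnb : (Hom A A)ˣ) : Hom A A)
      * ((((Units.oneSub b hnb : (Hom A A)ˣ))⁻¹ : (Hom A A)ˣ) : Hom A A)) = 1 := by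
    rw [Units.mul_inv]
    exact χ.map_one
  have h2 : χ.χ (((Units.oneSub b hnb : (Hom A A)ˣ) : Hom A A)
      * ((((Units.oneSub b hnb : (Hom A A)ˣ))⁻¹ : (Hom A A)ˣ) : Hom A A))
      = χ.χ ((Units.oneSub b hnb : (Hom A A)ˣ) : Hom A A)
        * χ.χ (((((Units.oneSub b hnb : (Hom A A)ˣ))⁻¹ : (Hom A A)ˣ)) : Hom A A) :=
    χ.map_mul _ _
  rw [h2, h0, zero_mul] at h1
  exact one_ne_zero h1.symm

lemma DiagChar.continuous' {A : O} (χ : DiagChar O Hom A) : Continuous χ.χ := by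
  let l : Hom A A →ₗ[ℂ] ℂ :=
    { toFun := χ.χ
      map_add' := χ.map_add
      map_smul' := fun c x => by simpa [smul_eq_mul] using χ.map_smul c x }
  exact (l.mkContinuous 1 (fun x => by rw [one_mul]; exact χ.norm_le' x)).continuous

lemma DiagChar.exists_comp_ne_zero (hf : IsFull O Hom) {A : O} (χ : DiagChar O Hom A)
    (B : O) : ∃ (x : Hom A B) (y : Hom B A), χ.χ (comp x y) ≠ 0 := by
  by_contra h
  push_neg at h
  have hspan : ∀ z ∈ (Submodule.span ℂ
      {z : Hom A A | ∃ (x : Hom A B) (y : Hom B A), z = comp x y} :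
        Submodule ℂ (Hom A A)), χ.χ z = 0 := by
    intro z hz
    induction hz using Submodule.span_induction with
    | mem w hw =>
      obtain ⟨x, y, rfl⟩ := hw
      exact h x y
    | zero => exact χ.map_zero'
    | add x y _ _ hx hy => rw [χ.map_add, hx, hy, add_zero]
    | smul c x _ hx => rw [χ.map_smul, hx, mul_zero]
  have hclosed : IsClosed {z : Hom A A | χ.χ z = 0} :=
    isClosed_eq χ.continuous' continuous_const
  have hsub : closure ((Submodule.span ℂ
      {z : Hom A A | ∃ (x : Hom A B) (y : Hom B A), z = comp x y} :
        Submodule ℂ (Hom A A)) : Set (Hom A A)) ⊆ {z : Hom A A | χ.χ z = 0} :=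
    closure_minimal hspan hclosed
  rw [hf A B] at hsub
  have hmem : χ.χ (ide A) = 0 := hsub (Set.mem_univ _)
  rw [χ.map_one] at hmem
  exact one_ne_zero hmem

lemma DiagChar.exists_selfadj_pos (hf : IsFull O Hom) {A : O} (χ : DiagChar O Hom A)
    (B : O) : ∃ (x : Hom A B) (r : ℝ), 0 < r ∧ χ.χ (comp x (invol x)) = (r : ℂ) := by
  obtain ⟨x, y, hxy⟩ := χ.exists_comp_ne_zero hf B
  obtain ⟨n, hn⟩ := CStarCat.pos (invol y)
  rw [invol_invol] at hn
  refine ⟨comp x (invol n), Complex.normSq (χ.χ (comp x y)),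
    Complex.normSq_pos.mpr hxy, ?_⟩
  have h1 : comp (comp x (invol n)) (invol (comp x (invol n)))
      = comp (comp x y) (invol (comp x y)) := by
    rw [invol_comp, invol_invol, invol_comp]
    simp only [comp_assoc]
    rw [← comp_assoc (invol n) n (invol x), ← hn, comp_assoc]
  rw [h1, χ.map_mul, χ.map_star, Complex.mul_conj]

lemma CStarAux.key_comm (hc : IsCommutative O Hom) {A C : O} (χ : DiagChar O Hom A)
    (u : Hom A C) (m : Hom C C) (v : Hom C A) (p : Hom A C) (q : Hom C A) :
    χ.χ (comp u (comp m v)) * χ.χ (comp p q)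
      = χ.χ (comp u v) * χ.χ (comp p (comp m q)) := by
  rw [← χ.map_mul, ← χ.map_mul]
  congr 1
  simp only [comp_assoc]
  rw [← comp_assoc v p q, ← comp_assoc m (comp v p) q, hc C m (comp v p)]
  simp only [comp_assoc]

/-- Restriction of a ℂ-valued *-functor to a diagonal block. -/
def CChar.toDiag (ω : CChar O Hom) (B : O) : DiagChar O Hom B :=
  { χ := ω.ω
    map_add := ω.map_add
    map_smul := ω.map_smul
    map_mul := ω.map_comp
    map_one := ω.map_ide B
    map_star := ω.map_invol }

end Aux

/-- For a full commutative C*-category C and an object A, the restriction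
map [ω] ↦ ω|_{C_{AA}} from the base spectrum (unitary equivalence classes of ℂ-valued
*-functors) to the Gelfand spectrum of C_{AA} is a well-defined bijection: it is constant
on equivalence classes, injective on classes, and surjective onto characters of C_{AA}. -/


theorem base_spectrum_restriction_bijective
    {O : Type*} {Hom : O → O → Type*}
    [∀ A B, NormedAddCommGroup (Hom A B)] [∀ A B, NormedSpace ℂ (Hom A B)]
    [CStarCat O Hom]
    (hc : IsCommutative O Hom) (hf : IsFull O Hom) (A : O) :
    (∀ ω ω' : CChar O Hom, UnitEquiv ω ω' → ∀ x : Hom A A, ω.ω x = ω'.ω x) ∧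
    (∀ ω ω' : CChar O Hom, (∀ x : Hom A A, ω.ω x = ω'.ω x) → UnitEquiv ω ω') ∧
    (∀ χ : DiagChar O Hom A, ∃ ω : CChar O Hom, ∀ x : Hom A A, ω.ω x = χ.χ x) := by
  classical
  refine ⟨?_, ?_, ?_⟩
  · -- well-definedness
    rintro ω ω' ⟨ν, hν1, hnat⟩ x
    have hA : ν A ≠ 0 := by
      intro h0
      have := hν1 A
      rw [h0, norm_zero] at this
      exact zero_ne_one this
    have h := hnat x
    rw [mul_comm (ν A) (ω.ω x)] at h
    exact (mul_right_cancel₀ hA h).symm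
  · -- injectivity
    intro ω ω' hAA
    have hex : ∀ B : O, ∃ x : Hom A B, ω.ω x ≠ 0 := by
      intro B
      obtain ⟨u, v, huv⟩ := (ω.toDiag B).exists_comp_ne_zero hf A
      have huv' : ω.ω (CStarCat.comp u v) ≠ 0 := huv
      rw [ω.map_comp] at huv'
      exact ⟨v, right_ne_zero_of_mul huv'⟩
    choose x₀ hx₀ using hex
    have key : ∀ (B : O) (x y : Hom A B),
        ω'.ω x * conj (ω'.ω y) = ω.ω x * conj (ω.ω y) := by
      intro B x y
      have h1 := hAA (CStarCat.comp x (CStarCat.invol y))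
      rw [ω.map_comp, ω'.map_comp, ω.map_invol, ω'.map_invol] at h1
      exact h1.symm
    have hconj : ∀ (B : O), conj (ω.ω (x₀ B)) ≠ 0 := by
      intro B h0
      exact hx₀ B (by simpa using congrArg conj h0)
    have hx₀' : ∀ B : O, ω'.ω (x₀ B) ≠ 0 := by
      intro B h0
      have hk := key B (x₀ B) (x₀ B)
      rw [h0, zero_mul] at hk
      rcases mul_eq_zero.mp hk.symm with h | h
      · exact hx₀ B h
      · exact hx₀ B (by simpa using congrArg conj h)
    refine ⟨fun B => ω.ω (x₀ B) / ω'.ω (x₀ B), ?_, ?_⟩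
    · intro B
      have hk := key B (x₀ B) (x₀ B)
      rw [Complex.mul_conj, Complex.mul_conj] at hk
      have hsq : Complex.normSq (ω'.ω (x₀ B)) = Complex.normSq (ω.ω (x₀ B)) := by
        exact_mod_cast hk
      have hnorm : ‖ω.ω (x₀ B)‖ = ‖ω'.ω (x₀ B)‖ := by
        rw [Complex.norm_def,
          Complex.norm_def, hsq]
      rw [norm_div, hnorm, div_self (norm_ne_zero_iff.mpr (hx₀' B))]
    · intro A' B z
      have hc2 : conj (ω.ω (x₀ B)) ≠ 0 := hconj B
      have h2 := key B (CStarCat.comp (x₀ A') z) (x₀ B)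
      rw [ω.map_comp, ω'.map_comp] at h2
      have hbb := key B (x₀ B) (x₀ B)
      have G : ω'.ω z * ω.ω (x₀ B) * ω'.ω (x₀ A')
          = ω.ω (x₀ A') * ω.ω z * ω'.ω (x₀ B) := by
        apply mul_right_cancel₀ hc2
        calc ω'.ω z * ω.ω (x₀ B) * ω'.ω (x₀ A') * conj (ω.ω (x₀ B))
            = ω'.ω (x₀ A') * ω'.ω z * (ω.ω (x₀ B) * conj (ω.ω (x₀ B))) := by ring
          _ = ω'.ω (x₀ A') * ω'.ω z * (ω'.ω (x₀ B) * conj (ω'.ω (x₀ B))) := by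
              rw [hbb]
          _ = ω'.ω (x₀ A') * ω'.ω z * conj (ω'.ω (x₀ B)) * ω'.ω (x₀ B) := by ring
          _ = ω.ω (x₀ A') * ω.ω z * conj (ω.ω (x₀ B)) * ω'.ω (x₀ B) := by rw [h2]
          _ = ω.ω (x₀ A') * ω.ω z * ω'.ω (x₀ B) * conj (ω.ω (x₀ B)) := by ring
      rw [mul_div_assoc', div_mul_eq_mul_div, div_eq_div_iff (hx₀' B) (hx₀' A')]
      linear_combination G
  · -- surjectivity
    intro χ
    have hsel : ∀ B : O, ∃ (x : Hom A B) (r : ℝ), 0 < r ∧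
        χ.χ (CStarCat.comp x (CStarCat.invol x)) = (r : ℂ) :=
      fun B => χ.exists_selfadj_pos hf B
    choose e r hr he using hsel
    set s : O → ℝ := fun B => Real.sqrt (r B) with hs_def
    have hs : ∀ B, 0 < s B := fun B => Real.sqrt_pos.mpr (hr B)
    have hsne : ∀ B, ((s B : ℂ)) ≠ 0 := fun B => Complex.ofReal_ne_zero.mpr (hs B).ne'
    have hrne : ∀ B, ((r B : ℂ)) ≠ 0 := fun B => Complex.ofReal_ne_zero.mpr (hr B).ne'
    have hs2 : ∀ B, (s B : ℂ) * (s B : ℂ) = (r B : ℂ) := by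
      intro B
      have : s B * s B = r B := Real.mul_self_sqrt (hr B).le
      exact_mod_cast this
    have hmid : ∀ (C : O) (u : Hom A C) (v : Hom C A),
        χ.χ (CStarCat.comp u (CStarCat.comp (CStarCat.comp (CStarCat.invol (e C)) (e C)) v))
          = (r C : ℂ) * χ.χ (CStarCat.comp u v) := by
      intro C u v
      have hk := CStarAux.key_comm hc χ u
        (CStarCat.comp (CStarCat.invol (e C)) (e C)) v (e C) (CStarCat.invol (e C))
      have h2 : CStarCat.comp (e C)
          (CStarCat.comp (CStarCat.comp (CStarCat.invol (e C)) (e C)) (CStarCat.invol (e C)))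
          = CStarCat.comp (CStarCat.comp (e C) (CStarCat.invol (e C)))
              (CStarCat.comp (e C) (CStarCat.invol (e C))) := by
        simp only [CStarCat.comp_assoc]
      rw [h2, χ.map_mul, he C] at hk
      exact mul_right_cancel₀ (hrne C) (by linear_combination hk)
    refine ⟨⟨fun {B C} z =>
        χ.χ (CStarCat.comp (e B) (CStarCat.comp z (CStarCat.invol (e C))))
          / ((s B : ℂ) * (s C : ℂ)), ?_, ?_, ?_, ?_, ?_⟩, ?_⟩
    · -- map_add
      intro B C x y
      beta_reduce
      rw [CStarCat.comp_add_left, CStarCat.comp_add_right, χ.map_add, add_div]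
    · -- map_smul
      intro B C c x
      beta_reduce
      rw [CStarCat.comp_smul_left, CStarCat.comp_smul_right, χ.map_smul, mul_div_assoc]
    · -- map_comp
      intro B C D z w
      beta_reduce
      have e1 : CStarCat.comp (CStarCat.comp (e B) (CStarCat.comp z (CStarCat.invol (e C))))
          (CStarCat.comp (e C) (CStarCat.comp w (CStarCat.invol (e D))))
          = CStarCat.comp (CStarCat.comp (e B) z)
              (CStarCat.comp (CStarCat.comp (CStarCat.invol (e C)) (e C))
                (CStarCat.comp w (CStarCat.invol (e D)))) := by
        simp only [CStarCat.comp_assoc]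
      have e2 : CStarCat.comp (CStarCat.comp (e B) z) (CStarCat.comp w (CStarCat.invol (e D)))
          = CStarCat.comp (e B) (CStarCat.comp (CStarCat.comp z w) (CStarCat.invol (e D))) := by
        simp only [CStarCat.comp_assoc]
      have h1 : χ.χ (CStarCat.comp (e B) (CStarCat.comp z (CStarCat.invol (e C))))
          * χ.χ (CStarCat.comp (e C) (CStarCat.comp w (CStarCat.invol (e D))))
          = (r C : ℂ) * χ.χ (CStarCat.comp (e B)
              (CStarCat.comp (CStarCat.comp z w) (CStarCat.invol (e D)))) := by
        rw [← χ.map_mul, e1, hmid C (CStarCat.comp (e B) z)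
          (CStarCat.comp w (CStarCat.invol (e D))), e2]
      rw [div_mul_div_comm, h1]
      rw [div_eq_div_iff (mul_ne_zero (hsne B) (hsne D))
        (mul_ne_zero (mul_ne_zero (hsne B) (hsne C)) (mul_ne_zero (hsne C) (hsne D)))]
      linear_combination (χ.χ (CStarCat.comp (e B)
        (CStarCat.comp (CStarCat.comp z w) (CStarCat.invol (e D)))) * (s B : ℂ) * (s D : ℂ))
        * hs2 C
    · -- map_ide
      intro B
      beta_reduce
      rw [CStarCat.ide_comp, he B, hs2 B, div_self (hrne B)]
    · -- map_invol
      intro B C z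
      beta_reduce
      have hinv : CStarCat.invol (CStarCat.comp (e B) (CStarCat.comp z (CStarCat.invol (e C))))
          = CStarCat.comp (e C) (CStarCat.comp (CStarCat.invol z) (CStarCat.invol (e B))) := by
        simp only [CStarCat.invol_comp, CStarCat.invol_invol, CStarCat.comp_assoc]
      rw [← hinv, χ.map_star, map_div₀, map_mul, Complex.conj_ofReal, Complex.conj_ofReal,
        mul_comm (s C : ℂ) (s B : ℂ)]
    · -- restriction
      intro x
      show χ.χ (CStarCat.comp (e A) (CStarCat.comp x (CStarCat.invol (e A))))
          / ((s A : ℂ) * (s A : ℂ)) = χ.χ x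
      rw [χ.map_mul, χ.map_mul]
      have hEA : χ.χ (e A) * χ.χ (CStarCat.invol (e A)) = (r A : ℂ) := by
        rw [← χ.map_mul, he A]
      rw [div_eq_iff (mul_ne_zero (hsne A) (hsne A)), hs2 A]
      linear_combination χ.χ x * hEA
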